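/- Under the exponential prime counting asymptotics, ln ζ_{G_k}(σ) = ρ Γ(1+γ) (σ−1)^{−1−γ} (1 + o(1)) as σ ↓ 1. -/

import Mathlib

open Filter Real Asymptotics Topology

/-- An additive arithmetical semigroup: a commutative monoid with a countable
set of primes, unique factorization into prime powers, and a degree map. -/
structure ArithSemigroup (M : Type) [CommMonoid M] where
  P : Set M
  countable_P : P.Countable
  deg : M → ℝ
  deg_one : deg 1 = 0
  deg_pos : ∀ p ∈ P, 0 < deg p
  deg_mul : ∀ a b : M, deg (a * b) = deg a + deg b
  finite_le : ∀ x : ℝ, {a : M | deg a ≤ x}.Finite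
  factor : ∀ a : M, ∃! n : P →₀ ℕ, a = n.prod fun p e => (p : M) ^ e

/-- `a` is `k`-th power-free: no divisor of the form `b ^ k` with `b ≠ 1`. -/
def ArithSemigroup.PowerFree {M : Type} [CommMonoid M] (_S : ArithSemigroup M)
    (k : ℕ) (a : M) : Prop :=
  ∀ b : M, b ≠ 1 → ¬ (b ^ k ∣ a)

/-- Counting function of `k`-th power-free elements of degree `≤ x`. -/
noncomputable def countPF {M : Type} [CommMonoid M] (S : ArithSemigroup M)
    (k : ℕ) (x : ℝ) : ℕ :=
  Nat.card {a : M | S.PowerFree k a ∧ S.deg a ≤ x}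

/-- Counting function of all elements of degree `≤ x`. -/
noncomputable def countAll {M : Type} [CommMonoid M] (S : ArithSemigroup M)
    (x : ℝ) : ℕ :=
  Nat.card {a : M | S.deg a ≤ x}

/-- Prime counting function. -/
noncomputable def primeCount {M : Type} [CommMonoid M] (S : ArithSemigroup M)
    (x : ℝ) : ℕ :=
  Nat.card {p : M | p ∈ S.P ∧ S.deg p ≤ x}

/-- The zeta function of the `k`-th power-free elements (real argument). -/
noncomputable def zetaPF {M : Type} [CommMonoid M] (S : ArithSemigroup M)
    (k : ℕ) (s : ℝ) : ℝ :=
  ∑' a : {a : M // S.PowerFree k a}, Real.exp (-s * S.deg a.1)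

/-- The zeta function of `G` (real argument). -/
noncomputable def zetaAll {M : Type} [CommMonoid M] (S : ArithSemigroup M)
    (s : ℝ) : ℝ :=
  ∑' a : M, Real.exp (-s * S.deg a)

/-- The exponential prime counting asymptotics
`π_G^#(x) = ρ x^γ e^x (1 + O(x^{-δ}))` as `x → ∞`. -/
def PrimeAsymp {M : Type} [CommMonoid M] (S : ArithSemigroup M)
    (ρ γ δ : ℝ) : Prop :=
  (fun x : ℝ => (primeCount S x : ℝ) - ρ * x ^ γ * Real.exp x) =O[atTop]
    fun x : ℝ => x ^ (γ - δ) * Real.exp x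

namespace AuxPF

variable {M : Type} [CommMonoid M] (S : ArithSemigroup M)

/-- product of prime powers -/
noncomputable def prodPow (n : S.P →₀ ℕ) : M := n.prod fun p e => (p : M) ^ e

lemma prodPow_zero : prodPow S 0 = 1 := Finsupp.prod_zero_index

lemma prodPow_add (m n : S.P →₀ ℕ) : prodPow S (m + n) = prodPow S m * prodPow S n := by
  classical
  exact Finsupp.prod_add_index' (fun p => pow_zero _) (fun p e f => pow_add _ _ _)

lemma prodPow_smul (c : ℕ) (n : S.P →₀ ℕ) : prodPow S (c • n) = (prodPow S n) ^ c := by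
  induction c with
  | zero => simp [prodPow_zero]
  | succ c ih => rw [succ_nsmul, prodPow_add, ih, pow_succ]

lemma deg_prod (s : Finset α) (f : α → M) :
    S.deg (∏ i ∈ s, f i) = ∑ i ∈ s, S.deg (f i) := by
  classical
  induction s using Finset.cons_induction with
  | empty => simpa using S.deg_one
  | cons a s ha ih => rw [Finset.prod_cons, Finset.sum_cons, S.deg_mul, ih]

lemma deg_pow (a : M) (n : ℕ) : S.deg (a ^ n) = n * S.deg a := by
  induction n with
  | zero => simpa using S.deg_one
  | succ n ih => rw [pow_succ, S.deg_mul, ih, Nat.cast_succ]; ring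

lemma deg_prodPow (n : S.P →₀ ℕ) :
    S.deg (prodPow S n) = n.sum fun p e => (e : ℝ) * S.deg p := by
  rw [prodPow, Finsupp.prod, deg_prod, Finsupp.sum]
  exact Finset.sum_congr rfl fun p _ => deg_pow S _ _

/-- the canonical factorization -/
noncomputable def fOf (a : M) : S.P →₀ ℕ := (S.factor a).exists.choose

lemma prodPow_fOf (a : M) : prodPow S (fOf S a) = a :=
  ((S.factor a).exists.choose_spec).symm

lemma fOf_eq {a : M} {n : S.P →₀ ℕ} (h : prodPow S n = a) : fOf S a = n := by
  obtain ⟨m, hm, hu⟩ := S.factor a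
  rw [hu _ (prodPow_fOf S a).symm, hu _ h.symm]

lemma prime_ne_one (p : S.P) : (p : M) ≠ 1 := by
  intro h
  have := S.deg_pos p p.2
  rw [h, S.deg_one] at this
  exact lt_irrefl 0 this

lemma one_lt_ne {b : M} (hb : b ≠ 1) : fOf S b ≠ 0 := by
  intro h
  apply hb
  have := prodPow_fOf S b
  rw [h, prodPow_zero] at this
  exact this.symm

lemma powerFree_iff {k : ℕ} (hk : 1 ≤ k) (a : M) :
    S.PowerFree k a ↔ ∀ p : S.P, fOf S a p < k := by
  constructor
  · intro hpf p
    by_contra hge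
    push_neg at hge
    apply hpf (p : M) (prime_ne_one S p)
    have hle : Finsupp.single p k ≤ fOf S a := by
      rw [Finsupp.single_le_iff]; exact hge
    refine ⟨prodPow S (fOf S a - Finsupp.single p k), ?_⟩
    have : fOf S a = Finsupp.single p k + (fOf S a - Finsupp.single p k) :=
      (add_tsub_cancel_of_le hle).symm
    calc a = prodPow S (fOf S a) := (prodPow_fOf S a).symm
    _ = prodPow S (Finsupp.single p k) * prodPow S (fOf S a - Finsupp.single p k) := by
        conv_lhs => rw [this]
        exact prodPow_add S _ _
    _ = (p : M) ^ k * prodPow S (fOf S a - Finsupp.single p k) := by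
        congr 1
        rw [prodPow]
        exact Finsupp.prod_single_index (pow_zero _)
  · intro hlt b hb ⟨c, hc⟩
    have hfa : fOf S a = k • fOf S b + fOf S c := by
      apply fOf_eq
      rw [prodPow_add, prodPow_smul, prodPow_fOf, prodPow_fOf, hc]
    obtain ⟨p, hp⟩ := Finsupp.ne_iff.mp (one_lt_ne S hb)
    simp only [Finsupp.coe_zero, Pi.zero_apply] at hp
    have h1 : 1 ≤ fOf S b p := Nat.one_le_iff_ne_zero.mpr hp
    have : k ≤ fOf S a p := by
      rw [hfa]
      simp only [Finsupp.coe_add, Finsupp.coe_smul, Pi.add_apply, Pi.smul_apply, smul_eq_mul]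
      calc k = k * 1 := (mul_one k).symm
      _ ≤ k * fOf S b p + fOf S c p := by
        exact le_add_of_le_of_nonneg (Nat.mul_le_mul_left k h1) (Nat.zero_le _)
    exact absurd (hlt p) (not_lt.mpr this)

lemma one_powerFree (k : ℕ) (hk : 1 ≤ k) : S.PowerFree k (1 : M) := by
  rw [powerFree_iff S hk]
  intro p
  have : fOf S (1 : M) = 0 := fOf_eq S (prodPow_zero S)
  rw [this]
  have hk0 : 0 < k := hk
  simpa using hk0

lemma deg_nonneg (a : M) : 0 ≤ S.deg a := by
  rw [← prodPow_fOf S a, deg_prodPow]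
  apply Finset.sum_nonneg
  intro p _
  exact mul_nonneg (Nat.cast_nonneg _) (S.deg_pos p p.2).le

section Analytic

open MeasureTheory Set
open scoped ENNReal

lemma primeCount_mono : Monotone (fun x => (primeCount S x : ℝ)) := by
  intro x y hxy
  have : primeCount S x ≤ primeCount S y := by
    rw [primeCount, primeCount, Nat.card_coe_set_eq, Nat.card_coe_set_eq]
    apply Set.ncard_le_ncard
    · exact fun a ha => ⟨ha.1, ha.2.trans hxy⟩
    · exact ((S.finite_le y).subset (fun a ha => ha.2)).subset (fun a ha => ha)
  simpa using this

lemma tsum_indicator_eq (x : ℝ) :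
    ∑' p : S.P, (if S.deg ↑p ≤ x then (1 : ℝ≥0∞) else 0) = (primeCount S x : ℝ≥0∞) := by
  classical
  haveI : Countable ↥S.P := S.countable_P.to_subtype
  set s : Set ↥S.P := {p | S.deg ↑p ≤ x} with hs
  have hfin : s.Finite := ((S.finite_le x).preimage (Subtype.val_injective.injOn))
  have h1 : ∀ p : ↥S.P, (if S.deg ↑p ≤ x then (1 : ℝ≥0∞) else 0) = s.indicator (fun _ => 1) p := by
    intro p; simp [s, Set.indicator_apply]
  rw [tsum_congr h1, ← tsum_subtype]
  haveI := hfin.fintype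
  rw [tsum_fintype]
  simp only [Finset.sum_const, nsmul_eq_mul, mul_one]
  have : Fintype.card s = primeCount S x := by
    rw [← Nat.card_eq_fintype_card, primeCount]
    apply Nat.card_congr
    exact ⟨fun p => ⟨p.1.1, p.1.2, p.2⟩, fun q => ⟨⟨q.1, q.2.1⟩, q.2.2⟩,
      fun _ => rfl, fun _ => rfl⟩
  rw [Finset.card_univ, this]

lemma integral_exp_tail {σ : ℝ} (hσ : 0 < σ) (d : ℝ) :
    ∫ x in Ioi d, σ * exp (-(σ * x)) = exp (-(σ * d)) := by
  rw [MeasureTheory.integral_const_mul]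
  have := MeasureTheory.integral_comp_mul_left_Ioi (fun x => exp (-x)) d hσ
  simp only [smul_eq_mul] at this
  rw [this, integral_exp_neg_Ioi]
  field_simp

lemma tsum_eq_lintegral {σ : ℝ} (hσ : 0 < σ) :
    ∑' p : S.P, ENNReal.ofReal (exp (-σ * S.deg ↑p)) =
      ENNReal.ofReal σ * ∫⁻ x in Ioi (0:ℝ), (primeCount S x : ℝ≥0∞) * ENNReal.ofReal (exp (-(σ * x))) := by
  classical
  haveI : Countable ↥S.P := S.countable_P.to_subtype
  set F : ↥S.P → ℝ → ℝ≥0∞ := fun p =>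
    (Ici (S.deg ↑p)).indicator (fun x => ENNReal.ofReal (σ * exp (-(σ * x)))) with hF
  have hmeas : ∀ p : ↥S.P, AEMeasurable (F p) (volume.restrict (Ioi (0:ℝ))) := by
    intro p
    apply AEMeasurable.indicator _ measurableSet_Ici
    apply Measurable.aemeasurable
    apply Measurable.ennreal_ofReal
    exact (continuous_const.mul ((continuous_const.mul continuous_id').neg.rexp)).measurable
  have hstep : ∀ p : ↥S.P, ∫⁻ x in Ioi (0:ℝ), F p x = ENNReal.ofReal (exp (-σ * S.deg ↑p)) := by
    intro p
    have hd : 0 < S.deg ↑p := S.deg_pos _ p.2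
    rw [hF]
    rw [lintegral_indicator measurableSet_Ici, Measure.restrict_restrict measurableSet_Ici]
    have hsub : Ici (S.deg ↑p) ∩ Ioi (0:ℝ) = Ici (S.deg ↑p) := by
      apply Set.inter_eq_self_of_subset_left
      exact fun x hx => lt_of_lt_of_le hd hx
    rw [hsub, setLIntegral_congr (Ioi_ae_eq_Ici (a := S.deg ↑p)).symm]
    have hint : IntegrableOn (fun x => σ * exp (-(σ * x))) (Ioi (S.deg ↑p)) := by
      have h2 : IntegrableOn (fun x => exp (-σ * x)) (Ioi (S.deg ↑p)) :=
        exp_neg_integrableOn_Ioi _ hσ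
      have h3 := h2.const_mul σ
      simpa [neg_mul, IntegrableOn] using h3
    have hnn : 0 ≤ᵐ[volume.restrict (Ioi (S.deg ↑p))] fun x => σ * exp (-(σ * x)) := by
      filter_upwards with x
      positivity
    have h4 := MeasureTheory.ofReal_integral_eq_lintegral_ofReal hint hnn
    rw [← h4, integral_exp_tail hσ]
    ring_nf
  calc ∑' p : S.P, ENNReal.ofReal (exp (-σ * S.deg ↑p))
      = ∑' p : S.P, ∫⁻ x in Ioi (0:ℝ), F p x := by
        exact tsum_congr fun p => (hstep p).symm
    _ = ∫⁻ x in Ioi (0:ℝ), ∑' p : S.P, F p x := (lintegral_tsum hmeas).symm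
    _ = ∫⁻ x in Ioi (0:ℝ), ENNReal.ofReal σ *
          ((primeCount S x : ℝ≥0∞) * ENNReal.ofReal (exp (-(σ * x)))) := by
        apply lintegral_congr
        intro x
        have hFx : ∀ p : ↥S.P, F p x =
            (if S.deg ↑p ≤ x then (1:ℝ≥0∞) else 0) * ENNReal.ofReal (σ * exp (-(σ * x))) := by
          intro p
          rw [hF]
          simp [Set.indicator_apply, Set.mem_Ici]
        rw [tsum_congr hFx, ENNReal.tsum_mul_right, tsum_indicator_eq,
          ENNReal.ofReal_mul hσ.le]
        ring
    _ = ENNReal.ofReal σ * ∫⁻ x in Ioi (0:ℝ),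
          (primeCount S x : ℝ≥0∞) * ENNReal.ofReal (exp (-(σ * x))) := by
        exact lintegral_const_mul' _ _ ENNReal.ofReal_ne_top

lemma int_rpow_exp {s b : ℝ} (hs : -1 < s) (hb : 0 < b) :
    IntegrableOn (fun x => x ^ s * exp (-(b * x))) (Ioi (0:ℝ)) := by
  have h := integrableOn_rpow_mul_exp_neg_mul_rpow hs zero_lt_one hb
  apply h.congr_fun _ measurableSet_Ioi
  intro x _
  simp [Real.rpow_one, neg_mul]

lemma int_rpow_exp_val {s b : ℝ} (hs : -1 < s) (hb : 0 < b) :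
    ∫ x in Ioi (0:ℝ), x ^ s * exp (-(b * x)) = Real.Gamma (s+1) * b ^ (-(s+1)) := by
  have h := Real.integral_rpow_mul_exp_neg_mul_Ioi (a := s+1) (r := b) (by linarith) hb
  simp only [add_sub_cancel_right] at h
  rw [h]
  have : (1 / b) ^ (s+1) = b ^ (-(s+1)) := by
    rw [one_div, ← Real.rpow_neg_one b, ← Real.rpow_mul hb.le]
    norm_num
  rw [this, mul_comm]

section Est

variable {ρ γ δ C X₀ δ' σ : ℝ}
variable (hρ : 0 < ρ) (hγ : -1 < γ) (hC : 0 ≤ C) (hX₀ : 1 ≤ X₀)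
variable (hδ'δ : δ' ≤ δ) (hγδ' : -1 < γ - δ')
variable (hbd : ∀ x, X₀ ≤ x → |((primeCount S x : ℝ)) - ρ * x ^ γ * exp x| ≤ C * x ^ (γ - δ) * exp x)

include hρ hγ hC hX₀ hδ'δ hγδ' hbd in
lemma count_integrable (hσ : 1 < σ) :
    IntegrableOn (fun x => (primeCount S x : ℝ) * exp (-(σ * x))) (Ioi (0:ℝ)) := by
  have hσ1 : 0 < σ - 1 := by linarith
  have hσ0 : 0 < σ := by linarith
  have hg1 : IntegrableOn (fun x => (primeCount S X₀ : ℝ) * exp (-(σ * x))) (Ioi (0:ℝ)) := by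
    have h2 : IntegrableOn (fun x => exp (-σ * x)) (Ioi (0:ℝ)) := exp_neg_integrableOn_Ioi _ hσ0
    have h3 := h2.const_mul (primeCount S X₀ : ℝ)
    simpa [neg_mul, IntegrableOn] using h3
  have hg2 : IntegrableOn
      (fun x => (ρ * x ^ γ + C * x ^ (γ - δ')) * exp (-((σ-1) * x))) (Ioi (0:ℝ)) := by
    have h4 := ((int_rpow_exp hγ hσ1).const_mul ρ).add ((int_rpow_exp hγδ' hσ1).const_mul C)
    apply MeasureTheory.IntegrableOn.congr_fun h4 _ measurableSet_Ioi
    intro x _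
    simp only [Pi.add_apply]
    ring
  apply Integrable.mono' (hg1.add hg2)
  · apply Measurable.aestronglyMeasurable
    apply Measurable.mul
    · exact (primeCount_mono S).measurable
    · exact ((continuous_const.mul continuous_id').neg.rexp).measurable
  · filter_upwards [ae_restrict_mem measurableSet_Ioi] with x hx
    simp only [Set.mem_Ioi] at hx
    have hexp : (0:ℝ) < exp (-(σ * x)) := exp_pos _
    have hnn : (0:ℝ) ≤ (primeCount S x : ℝ) := Nat.cast_nonneg _
    rw [Real.norm_eq_abs, abs_of_nonneg (by positivity)]
    simp only [Pi.add_apply]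
    rcases le_or_gt x X₀ with hcase | hcase
    · have h5 : (primeCount S x : ℝ) ≤ (primeCount S X₀ : ℝ) := primeCount_mono S hcase
      have h6 : 0 ≤ (ρ * x ^ γ + C * x ^ (γ - δ')) * exp (-((σ-1) * x)) := by positivity
      nlinarith [mul_le_mul_of_nonneg_right h5 hexp.le]
    · have h7 := hbd x hcase.le
      have h8 : (primeCount S x : ℝ) ≤ ρ * x ^ γ * exp x + C * x ^ (γ - δ) * exp x := by
        have := abs_le.mp h7
        linarith [this.2]
      have h9 : x ^ (γ - δ) ≤ x ^ (γ - δ') :=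
        Real.rpow_le_rpow_of_exponent_le (le_trans hX₀ hcase.le) (by linarith)
    
      have h10 : (primeCount S x : ℝ) * exp (-(σ * x)) ≤
          (ρ * x ^ γ + C * x ^ (γ - δ')) * (exp x * exp (-(σ * x))) := by
        have hh : (primeCount S x : ℝ) ≤ (ρ * x ^ γ + C * x ^ (γ - δ')) * exp x := by
          nlinarith [exp_pos x, mul_le_mul_of_nonneg_right h9 (exp_pos x).le]
        nlinarith [mul_le_mul_of_nonneg_right hh hexp.le]
      have h11 : exp x * exp (-(σ * x)) = exp (-((σ-1) * x)) := by
        rw [← Real.exp_add]; ring_nf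
      rw [h11] at h10
      have h12 : 0 ≤ (primeCount S X₀ : ℝ) * exp (-(σ * x)) := by positivity
      linarith

include hρ hγ hC hX₀ hδ'δ hγδ' hbd in
lemma lint_eq_ofReal (hσ : 1 < σ) :
    ∫⁻ x in Ioi (0:ℝ), (primeCount S x : ℝ≥0∞) * ENNReal.ofReal (exp (-(σ * x))) =
      ENNReal.ofReal (∫ x in Ioi (0:ℝ), (primeCount S x : ℝ) * exp (-(σ * x))) := by
  have hint := count_integrable S hρ hγ hC hX₀ hδ'δ hγδ' hbd hσ
  have hnn : 0 ≤ᵐ[volume.restrict (Ioi (0:ℝ))] fun x => (primeCount S x : ℝ) * exp (-(σ * x)) := by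
    filter_upwards with x
    positivity
  rw [MeasureTheory.ofReal_integral_eq_lintegral_ofReal hint hnn]
  apply lintegral_congr
  intro x
  rw [ENNReal.ofReal_mul (Nat.cast_nonneg _), ENNReal.ofReal_natCast]

include hρ hγ hC hX₀ hδ'δ hγδ' hbd in
lemma summable_primes (hσ : 1 < σ) :
    Summable (fun p : S.P => exp (-σ * S.deg ↑p)) := by
  haveI : Countable ↥S.P := S.countable_P.to_subtype
  have h := tsum_eq_lintegral S (by linarith : (0:ℝ) < σ)
  rw [lint_eq_ofReal S hρ hγ hC hX₀ hδ'δ hγδ' hbd hσ] at h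
  have hne : (∑' p : S.P, ENNReal.ofReal (exp (-σ * S.deg ↑p))) ≠ ⊤ := by
    rw [h]
    exact ENNReal.mul_ne_top ENNReal.ofReal_ne_top ENNReal.ofReal_ne_top
  have h2 := ENNReal.summable_toReal hne
  apply h2.congr
  intro p
  rw [ENNReal.toReal_ofReal (exp_nonneg _)]

include hρ hγ hC hX₀ hδ'δ hγδ' hbd in
lemma primeSum_eq (hσ : 1 < σ) :
    ∑' p : S.P, exp (-σ * S.deg ↑p) =
      σ * ∫ x in Ioi (0:ℝ), (primeCount S x : ℝ) * exp (-(σ * x)) := by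
  haveI : Countable ↥S.P := S.countable_P.to_subtype
  have h := tsum_eq_lintegral S (by linarith : (0:ℝ) < σ)
  rw [lint_eq_ofReal S hρ hγ hC hX₀ hδ'δ hγδ' hbd hσ] at h
  have hI : 0 ≤ ∫ x in Ioi (0:ℝ), (primeCount S x : ℝ) * exp (-(σ * x)) := by
    apply MeasureTheory.integral_nonneg
    intro x
    positivity
  have := congrArg ENNReal.toReal h
  rw [ENNReal.tsum_toReal_eq (fun p => ENNReal.ofReal_ne_top), ENNReal.toReal_mul,
    ENNReal.toReal_ofReal (by linarith : (0:ℝ) ≤ σ), ENNReal.toReal_ofReal hI] at this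
  calc ∑' p : S.P, exp (-σ * S.deg ↑p)
      = ∑' p : S.P, (ENNReal.ofReal (exp (-σ * S.deg ↑p))).toReal := by
        exact tsum_congr fun p => (ENNReal.toReal_ofReal (exp_nonneg _)).symm
    _ = _ := this

include hρ hγ hC hX₀ hδ'δ hγδ' hbd in
lemma I_est (hσ : 1 < σ) :
    |(∫ x in Ioi (0:ℝ), (primeCount S x : ℝ) * exp (-(σ * x))) -
        ρ * (Real.Gamma (γ+1) * (σ-1) ^ (-(γ+1)))| ≤
      ((primeCount S X₀ : ℝ) * X₀ + ρ * ∫ x in Ioc (0:ℝ) X₀, x ^ γ) +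
        C * (Real.Gamma (γ-δ'+1) * (σ-1) ^ (-(γ-δ'+1))) := by
  have hσ1 : 0 < σ - 1 := by linarith
  have hX0 : (0:ℝ) ≤ X₀ := by linarith
  -- main term
  have hmain_int : IntegrableOn (fun x => ρ * (x ^ γ * exp (-((σ-1) * x)))) (Ioi (0:ℝ)) :=
    (int_rpow_exp hγ hσ1).const_mul ρ
  have hmain_val : ∫ x in Ioi (0:ℝ), ρ * (x ^ γ * exp (-((σ-1) * x))) =
      ρ * (Real.Gamma (γ+1) * (σ-1) ^ (-(γ+1))) := by
    rw [MeasureTheory.integral_const_mul, int_rpow_exp_val hγ hσ1]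
  have hf_int := count_integrable S hρ hγ hC hX₀ hδ'δ hγδ' hbd hσ
  set D : ℝ → ℝ := fun x => (primeCount S x : ℝ) * exp (-(σ * x)) -
    ρ * (x ^ γ * exp (-((σ-1) * x))) with hD
  have hD_int : IntegrableOn D (Ioi (0:ℝ)) := hf_int.sub hmain_int
  have hsplit : Ioc (0:ℝ) X₀ ∪ Ioi X₀ = Ioi (0:ℝ) := Ioc_union_Ioi_eq_Ioi (by linarith)
  have step1 : (∫ x in Ioi (0:ℝ), (primeCount S x : ℝ) * exp (-(σ * x))) -
      ρ * (Real.Gamma (γ+1) * (σ-1) ^ (-(γ+1))) = ∫ x in Ioi (0:ℝ), D x := by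
    rw [← hmain_val, ← MeasureTheory.integral_sub hf_int hmain_int]
  rw [step1]
  have habs : |∫ x in Ioi (0:ℝ), D x| ≤ ∫ x in Ioi (0:ℝ), |D x| := by
    simpa [Real.norm_eq_abs] using
      MeasureTheory.norm_integral_le_integral_norm (μ := volume.restrict (Ioi (0:ℝ))) D
  refine habs.trans ?_
  have habs_int : IntegrableOn (fun x => |D x|) (Ioi (0:ℝ)) := hD_int.abs
  rw [← hsplit, MeasureTheory.setIntegral_union (Set.Ioc_disjoint_Ioi le_rfl)
    measurableSet_Ioi (habs_int.mono_set (by rw [← hsplit]; exact Set.subset_union_left))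
    (habs_int.mono_set (by rw [← hsplit]; exact Set.subset_union_right))]
  -- piece 1
  have hrpow_int : IntegrableOn (fun x => x ^ γ) (Ioc (0:ℝ) X₀) := by
    have := intervalIntegral.intervalIntegrable_rpow' (a := 0) (b := X₀) hγ
    rwa [intervalIntegrable_iff_integrableOn_Ioc_of_le hX0] at this
  have hg1_int : IntegrableOn (fun x => (primeCount S X₀ : ℝ) + ρ * x ^ γ) (Ioc (0:ℝ) X₀) := by
    exact (integrableOn_const measure_Ioc_lt_top.ne).add (hrpow_int.const_mul ρ)
  have p1 : ∫ x in Ioc (0:ℝ) X₀, |D x| ≤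
      (primeCount S X₀ : ℝ) * X₀ + ρ * ∫ x in Ioc (0:ℝ) X₀, x ^ γ := by
    have hle : ∀ x ∈ Ioc (0:ℝ) X₀, |D x| ≤ (primeCount S X₀ : ℝ) + ρ * x ^ γ := by
      intro x hx
      have hx0 : 0 < x := hx.1
      have hxg : (0:ℝ) ≤ x ^ γ := (Real.rpow_pos_of_pos hx.1 γ).le
      have h1 : |D x| ≤ (primeCount S x : ℝ) * exp (-(σ * x)) +
          ρ * (x ^ γ * exp (-((σ-1) * x))) := by
        simp only [hD]
        rw [abs_sub_le_iff]
        have ha : (0:ℝ) ≤ (primeCount S x : ℝ) * exp (-(σ * x)) := by positivity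
        have hb : (0:ℝ) ≤ ρ * (x ^ γ * exp (-((σ-1) * x))) := by positivity
        constructor <;> linarith
      have e1 : exp (-(σ * x)) ≤ 1 := exp_le_one_iff.mpr (by nlinarith)
      have e2 : exp (-((σ-1) * x)) ≤ 1 := exp_le_one_iff.mpr (by nlinarith)
      have c1 : (primeCount S x : ℝ) * exp (-(σ * x)) ≤ (primeCount S X₀ : ℝ) := by
        have := primeCount_mono S hx.2
        nlinarith [Nat.cast_nonneg (α := ℝ) (primeCount S x), exp_pos (-(σ * x))]
      have c2 : ρ * (x ^ γ * exp (-((σ-1) * x))) ≤ ρ * x ^ γ := by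
        have h21 := mul_le_mul_of_nonneg_left e2 hxg
        nlinarith
      linarith
    calc ∫ x in Ioc (0:ℝ) X₀, |D x|
        ≤ ∫ x in Ioc (0:ℝ) X₀, ((primeCount S X₀ : ℝ) + ρ * x ^ γ) :=
          MeasureTheory.setIntegral_mono_on
            (habs_int.mono_set (by rw [← hsplit]; exact Set.subset_union_left))
            hg1_int measurableSet_Ioc hle
      _ = (primeCount S X₀ : ℝ) * X₀ + ρ * ∫ x in Ioc (0:ℝ) X₀, x ^ γ := by
          rw [MeasureTheory.integral_add (integrableOn_const measure_Ioc_lt_top.ne :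
              Integrable (fun _ => (primeCount S X₀ : ℝ)) (volume.restrict (Ioc (0:ℝ) X₀)))
            (hrpow_int.const_mul ρ), MeasureTheory.setIntegral_const,
            MeasureTheory.integral_const_mul, Real.volume_real_Ioc_of_le hX0]
          rw [sub_zero, smul_eq_mul, mul_comm]
  -- piece 2
  have htail_int : IntegrableOn (fun x => C * (x ^ (γ - δ') * exp (-((σ-1) * x)))) (Ioi (0:ℝ)) :=
    (int_rpow_exp hγδ' hσ1).const_mul C
  have p2 : ∫ x in Ioi X₀, |D x| ≤ C * (Real.Gamma (γ-δ'+1) * (σ-1) ^ (-(γ-δ'+1))) := by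
    have hle : ∀ x ∈ Ioi X₀, |D x| ≤ C * (x ^ (γ - δ') * exp (-((σ-1) * x))) := by
      intro x hx
      simp only [Set.mem_Ioi] at hx
      have hx1 : (1:ℝ) ≤ x := le_trans hX₀ hx.le
      have hDx : D x = ((primeCount S x : ℝ) - ρ * x ^ γ * exp x) * exp (-(σ * x)) := by
        simp only [hD]
        have hh : exp (-((σ-1) * x)) = exp x * exp (-(σ * x)) := by
          rw [← Real.exp_add]; ring_nf
        rw [hh]; ring
      rw [hDx, abs_mul, abs_of_nonneg (exp_nonneg _)]
      have h7 := hbd x hx.le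
      have h9 : x ^ (γ - δ) ≤ x ^ (γ - δ') :=
        Real.rpow_le_rpow_of_exponent_le hx1 (by linarith)
      have h10 : |((primeCount S x : ℝ)) - ρ * x ^ γ * exp x| * exp (-(σ * x)) ≤
          (C * x ^ (γ - δ') * exp x) * exp (-(σ * x)) := by
        apply mul_le_mul_of_nonneg_right _ (exp_nonneg _)
        refine h7.trans ?_
        have := mul_le_mul_of_nonneg_right h9 (exp_nonneg x)
        nlinarith
      refine h10.trans_eq ?_
      have : exp x * exp (-(σ * x)) = exp (-((σ-1) * x)) := by
        rw [← Real.exp_add]; ring_nf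
      calc C * x ^ (γ - δ') * exp x * exp (-(σ * x))
          = C * (x ^ (γ - δ') * (exp x * exp (-(σ * x)))) := by ring
        _ = C * (x ^ (γ - δ') * exp (-((σ-1) * x))) := by rw [this]
    calc ∫ x in Ioi X₀, |D x|
        ≤ ∫ x in Ioi X₀, C * (x ^ (γ - δ') * exp (-((σ-1) * x))) :=
          MeasureTheory.setIntegral_mono_on
            (habs_int.mono_set (by rw [← hsplit]; exact Set.subset_union_right))
            (htail_int.mono_set (fun x hx => lt_trans (by linarith : (0:ℝ) < X₀) hx))
            measurableSet_Ioi hle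
      _ ≤ ∫ x in Ioi (0:ℝ), C * (x ^ (γ - δ') * exp (-((σ-1) * x))) := by
          apply MeasureTheory.setIntegral_mono_set htail_int
          · filter_upwards [ae_restrict_mem measurableSet_Ioi] with x hx
            have hx0 : (0:ℝ) < x := hx
            positivity
          · exact HasSubset.Subset.eventuallyLE (fun x hx => lt_trans (by linarith : (0:ℝ) < X₀) hx)
      _ = C * (Real.Gamma (γ-δ'+1) * (σ-1) ^ (-(γ-δ'+1))) := by
          rw [MeasureTheory.integral_const_mul, int_rpow_exp_val hγδ' hσ1]
  linarith

end Est

section Euler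

variable {k : ℕ} {σ : ℝ}

lemma exp_lb {u : ℝ} (hu0 : 0 ≤ u) : exp (u - u^2) ≤ 1 + u := by
  have hE : 0 < exp (u^2 - u) := exp_pos _
  have h1 : (u^2 - u) + 1 ≤ exp (u^2 - u) := Real.add_one_le_exp _
  have h2 : exp (u - u^2) * exp (u^2 - u) = 1 := by
    rw [← Real.exp_add]
    norm_num
  nlinarith [exp_pos (u - u^2)]

lemma factor_ub (hk : 2 ≤ k) {u : ℝ} (hu0 : 0 ≤ u) (hu1 : u ≤ 1) :
    ∑ e ∈ Finset.range k, u ^ e ≤ exp (u + ((k:ℝ) - 2) * u^2) := by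
  have hsplit : ∑ e ∈ Finset.range 2, u ^ e + ∑ e ∈ Finset.Ico 2 k, u ^ e
      = ∑ e ∈ Finset.range k, u ^ e := Finset.sum_range_add_sum_Ico _ hk
  have h2 : ∑ e ∈ Finset.Ico 2 k, u ^ e ≤ ((k:ℝ) - 2) * u^2 := by
    have hb : ∀ e ∈ Finset.Ico 2 k, u ^ e ≤ u ^ 2 := fun e he =>
      pow_le_pow_of_le_one hu0 hu1 (Finset.mem_Ico.mp he).1
    have := Finset.sum_le_card_nsmul _ _ _ hb
    rw [Nat.card_Ico] at this
    have hcast : ((k - 2 : ℕ) : ℝ) = (k:ℝ) - 2 := by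
      rw [Nat.cast_sub hk]; norm_num
    calc ∑ e ∈ Finset.Ico 2 k, u ^ e ≤ (k - 2 : ℕ) • u ^ 2 := this
      _ = ((k:ℝ) - 2) * u^2 := by rw [nsmul_eq_mul, hcast]
  have h3 : ∑ e ∈ Finset.range 2, u ^ e = 1 + u := by
    simp [Finset.sum_range_succ]
  have h4 := Real.add_one_le_exp (u + ((k:ℝ) - 2) * u^2)
  linarith

lemma factor_lb (hk : 2 ≤ k) {u : ℝ} (hu0 : 0 ≤ u) :
    1 + u ≤ ∑ e ∈ Finset.range k, u ^ e := by
  have hsplit : ∑ e ∈ Finset.range 2, u ^ e + ∑ e ∈ Finset.Ico 2 k, u ^ e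
      = ∑ e ∈ Finset.range k, u ^ e := Finset.sum_range_add_sum_Ico _ hk
  have h3 : ∑ e ∈ Finset.range 2, u ^ e = 1 + u := by
    simp [Finset.sum_range_succ]
  have h2 : 0 ≤ ∑ e ∈ Finset.Ico 2 k, u ^ e :=
    Finset.sum_nonneg fun e _ => pow_nonneg hu0 e
  linarith

variable [DecidableEq ↥S.P]

/-- build a finsupp from a dependent function on a finset -/
noncomputable def nOf (Q : Finset ↥S.P) (g : ∀ p ∈ Q, ℕ) : ↥S.P →₀ ℕ :=
  Finsupp.onFinset Q (fun p => if h : p ∈ Q then g p h else 0)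
    (fun p hp => by by_contra h; simp [h] at hp)

lemma nOf_mem {Q : Finset ↥S.P} {g : ∀ p ∈ Q, ℕ} {p : ↥S.P} (hp : p ∈ Q) :
    nOf S Q g p = g p hp := by simp [nOf, hp]

lemma nOf_not_mem {Q : Finset ↥S.P} {g : ∀ p ∈ Q, ℕ} {p : ↥S.P} (hp : p ∉ Q) :
    nOf S Q g p = 0 := by simp [nOf, hp]

lemma nOf_support {Q : Finset ↥S.P} {g : ∀ p ∈ Q, ℕ} : (nOf S Q g).support ⊆ Q :=
  Finsupp.support_onFinset_subset

lemma term_eq (Q : Finset ↥S.P) (g : ∀ p ∈ Q, ℕ) :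
    exp (-σ * S.deg (prodPow S (nOf S Q g))) =
      ∏ x ∈ Q.attach, (exp (-σ * S.deg ↑(x.1))) ^ (g x.1 x.2) := by
  rw [deg_prodPow]
  rw [Finsupp.sum_of_support_subset _ (nOf_support S) (fun p e => (e : ℝ) * S.deg ↑p)
    (fun p _ => by simp)]
  rw [← Finset.sum_attach Q (fun p => ((nOf S Q g p : ℝ) * S.deg ↑p))]
  rw [Finset.mul_sum, Real.exp_sum]
  apply Finset.prod_congr rfl
  intro x _
  rw [nOf_mem S x.2, ← Real.exp_nat_mul]
  ring_nf

lemma sum_pi_eq (Q : Finset ↥S.P) (k : ℕ) :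
    ∑ g ∈ Q.pi (fun _ => Finset.range k), exp (-σ * S.deg (prodPow S (nOf S Q g)))
      = ∏ p ∈ Q, ∑ e ∈ Finset.range k, (exp (-σ * S.deg ↑p)) ^ e := by
  rw [Finset.prod_sum]
  exact Finset.sum_congr rfl fun g _ => term_eq S Q g

lemma nOf_injOn (Q : Finset ↥S.P) (k : ℕ) :
    Set.InjOn (fun g => nOf S Q g) (Q.pi (fun _ => Finset.range k)) := by
  intro g hg g' hg' h
  funext p hp
  have := DFunLike.congr_fun h p
  simp only at this
  rwa [nOf_mem S hp, nOf_mem S hp] at this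

lemma prodPow_nOf_powerFree {k : ℕ} (hk : 2 ≤ k) {Q : Finset ↥S.P}
    {g : ∀ p ∈ Q, ℕ} (hg : g ∈ Q.pi (fun _ => Finset.range k)) :
    S.PowerFree k (prodPow S (nOf S Q g)) := by
  rw [powerFree_iff S (by omega)]
  intro p
  rw [fOf_eq S rfl]
  by_cases hp : p ∈ Q
  · rw [nOf_mem S hp]
    exact Finset.mem_range.mp (Finset.mem_pi.mp hg p hp)
  · rw [nOf_not_mem S hp]; omega

lemma sq_term_le (hσ1 : 1 ≤ σ) (p : ↥S.P) :
    (exp (-σ * S.deg ↑p))^2 ≤ exp (-2 * S.deg ↑p) := by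
  have hd : 0 < S.deg ↑p := S.deg_pos _ p.2
  rw [← Real.exp_nat_mul]
  apply Real.exp_le_exp.mpr
  push_cast
  nlinarith

lemma partial_le (hk : 2 ≤ k) (hσ1 : 1 ≤ σ)
    (hsum : Summable (fun p : S.P => exp (-σ * S.deg ↑p)))
    (hsum2 : Summable (fun p : S.P => exp (-2 * S.deg ↑p)))
    (F : Finset {a : M // S.PowerFree k a}) :
    ∑ a ∈ F, exp (-σ * S.deg ↑a) ≤
      exp ((∑' p : S.P, exp (-σ * S.deg ↑p)) +
        ((k:ℝ) - 2) * ∑' p : S.P, exp (-2 * S.deg ↑p)) := by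
  classical
  have hσ0 : 0 < σ := by linarith
  set Q : Finset ↥S.P := F.biUnion (fun a => (fOf S ↑a).support) with hQ
  set e : {a : M // S.PowerFree k a} → (∀ p ∈ Q, ℕ) := fun a p _ => fOf S ↑a p with he
  have hmem : ∀ a ∈ F, e a ∈ Q.pi (fun _ => Finset.range k) := by
    intro a _
    apply Finset.mem_pi.mpr
    intro p hp
    exact Finset.mem_range.mpr ((powerFree_iff S (by omega) _).mp a.2 p)
  have hnOf : ∀ a ∈ F, nOf S Q (e a) = fOf S ↑a := by
    intro a ha
    ext p
    by_cases hp : p ∈ Q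
    · rw [nOf_mem S hp]
    · rw [nOf_not_mem S hp]
      symm
      rw [← Finsupp.notMem_support_iff]
      intro hsupp
      exact hp (Finset.mem_biUnion.mpr ⟨a, ha, hsupp⟩)
  have hinj : ∀ a ∈ F, ∀ b ∈ F, e a = e b → a = b := by
    intro a ha b hb h
    have h1 : fOf S (↑a : M) = fOf S ↑b := by rw [← hnOf a ha, ← hnOf b hb, h]
    have h2 : (↑a : M) = ↑b := by
      rw [← prodPow_fOf S (↑a : M), ← prodPow_fOf S (↑b : M), h1]
    exact Subtype.ext h2
  calc ∑ a ∈ F, exp (-σ * S.deg ↑a)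
      = ∑ g ∈ F.image e, exp (-σ * S.deg (prodPow S (nOf S Q g))) := by
        rw [Finset.sum_image hinj]
        apply Finset.sum_congr rfl
        intro a ha
        rw [hnOf a ha, prodPow_fOf]
    _ ≤ ∑ g ∈ Q.pi (fun _ => Finset.range k), exp (-σ * S.deg (prodPow S (nOf S Q g))) := by
        apply Finset.sum_le_sum_of_subset_of_nonneg
        · intro g hg
          obtain ⟨a, ha, rfl⟩ := Finset.mem_image.mp hg
          exact hmem a ha
        · exact fun _ _ _ => (exp_pos _).le
    _ = ∏ p ∈ Q, ∑ e' ∈ Finset.range k, (exp (-σ * S.deg ↑p)) ^ e' := sum_pi_eq S Q k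
    _ ≤ ∏ p ∈ Q, exp (exp (-σ * S.deg ↑p) + ((k:ℝ) - 2) * (exp (-σ * S.deg ↑p))^2) := by
        apply Finset.prod_le_prod
        · exact fun p _ => Finset.sum_nonneg fun e' _ => pow_nonneg (exp_nonneg _) _
        · intro p _
          apply factor_ub hk (exp_nonneg _)
          apply exp_le_one_iff.mpr
          have := S.deg_pos _ p.2
          nlinarith
    _ = exp (∑ p ∈ Q, (exp (-σ * S.deg ↑p) + ((k:ℝ) - 2) * (exp (-σ * S.deg ↑p))^2)) :=
        (Real.exp_sum _ _).symm
    _ ≤ _ := by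
        apply Real.exp_le_exp.mpr
        rw [Finset.sum_add_distrib]
        have h1 : ∑ p ∈ Q, exp (-σ * S.deg ↑p) ≤ ∑' p : S.P, exp (-σ * S.deg ↑p) :=
          Summable.sum_le_tsum Q (fun p _ => (exp_nonneg _)) hsum
        have h2 : ∑ p ∈ Q, ((k:ℝ) - 2) * (exp (-σ * S.deg ↑p))^2 ≤
            ((k:ℝ) - 2) * ∑' p : S.P, exp (-2 * S.deg ↑p) := by
          rw [← Finset.mul_sum]
          apply mul_le_mul_of_nonneg_left _ (by simp; exact_mod_cast hk)
          calc ∑ p ∈ Q, (exp (-σ * S.deg ↑p))^2 ≤ ∑ p ∈ Q, exp (-2 * S.deg ↑p) :=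
              Finset.sum_le_sum fun p _ => sq_term_le S hσ1 p
            _ ≤ ∑' p : S.P, exp (-2 * S.deg ↑p) :=
              Summable.sum_le_tsum Q (fun p _ => (exp_nonneg _)) hsum2
        linarith

lemma summable_PF (hk : 2 ≤ k) (hσ1 : 1 ≤ σ)
    (hsum : Summable (fun p : S.P => exp (-σ * S.deg ↑p)))
    (hsum2 : Summable (fun p : S.P => exp (-2 * S.deg ↑p))) :
    Summable (fun a : {a : M // S.PowerFree k a} => exp (-σ * S.deg ↑a)) :=
  summable_of_sum_le (fun _ => exp_nonneg _) (partial_le S hk hσ1 hsum hsum2)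

lemma zeta_ub (hk : 2 ≤ k) (hσ1 : 1 ≤ σ)
    (hsum : Summable (fun p : S.P => exp (-σ * S.deg ↑p)))
    (hsum2 : Summable (fun p : S.P => exp (-2 * S.deg ↑p))) :
    ∑' a : {a : M // S.PowerFree k a}, exp (-σ * S.deg ↑a) ≤
      exp ((∑' p : S.P, exp (-σ * S.deg ↑p)) +
        ((k:ℝ) - 2) * ∑' p : S.P, exp (-2 * S.deg ↑p)) :=
  Summable.tsum_le_of_sum_le (summable_PF S hk hσ1 hsum hsum2) (partial_le S hk hσ1 hsum hsum2)

lemma zeta_lb (hk : 2 ≤ k) (hσ1 : 1 ≤ σ)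
    (hsum : Summable (fun p : S.P => exp (-σ * S.deg ↑p)))
    (hsum2 : Summable (fun p : S.P => exp (-2 * S.deg ↑p))) :
    exp ((∑' p : S.P, exp (-σ * S.deg ↑p)) - ∑' p : S.P, exp (-2 * S.deg ↑p)) ≤
      ∑' a : {a : M // S.PowerFree k a}, exp (-σ * S.deg ↑a) := by
  classical
  have key : ∀ Q : Finset ↥S.P,
      exp ((∑ p ∈ Q, exp (-σ * S.deg ↑p)) - ∑' p : S.P, exp (-2 * S.deg ↑p)) ≤
        ∑' a : {a : M // S.PowerFree k a}, exp (-σ * S.deg ↑a) := by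
    intro Q
    have h2 : ∑ p ∈ Q, (exp (-σ * S.deg ↑p))^2 ≤ ∑' p : S.P, exp (-2 * S.deg ↑p) :=
      le_trans (Finset.sum_le_sum fun p _ => sq_term_le S hσ1 p)
        (Summable.sum_le_tsum Q (fun p _ => (exp_nonneg _)) hsum2)
    set G : Finset {a : M // S.PowerFree k a} :=
      ((Q.pi (fun _ => Finset.range k)).attach).image
        (fun g => ⟨prodPow S (nOf S Q g.1), prodPow_nOf_powerFree S hk g.2⟩) with hG
    calc exp ((∑ p ∈ Q, exp (-σ * S.deg ↑p)) - ∑' p : S.P, exp (-2 * S.deg ↑p))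
        ≤ exp (∑ p ∈ Q, (exp (-σ * S.deg ↑p) - (exp (-σ * S.deg ↑p))^2)) := by
          apply Real.exp_le_exp.mpr
          rw [Finset.sum_sub_distrib]
          linarith
      _ = ∏ p ∈ Q, exp (exp (-σ * S.deg ↑p) - (exp (-σ * S.deg ↑p))^2) := Real.exp_sum _ _
      _ ≤ ∏ p ∈ Q, (1 + exp (-σ * S.deg ↑p)) :=
          Finset.prod_le_prod (fun p _ => (exp_pos _).le)
            (fun p _ => exp_lb (exp_nonneg _))
      _ ≤ ∏ p ∈ Q, ∑ e' ∈ Finset.range k, (exp (-σ * S.deg ↑p)) ^ e' :=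
          Finset.prod_le_prod (fun p _ => by positivity)
            (fun p _ => factor_lb hk (exp_nonneg _))
      _ = ∑ g ∈ Q.pi (fun _ => Finset.range k), exp (-σ * S.deg (prodPow S (nOf S Q g))) :=
          (sum_pi_eq S Q k).symm
      _ = ∑ b ∈ G, exp (-σ * S.deg ↑b) := by
          rw [hG, Finset.sum_image]
          · exact (Finset.sum_attach _ _).symm
          · intro g _ g' _ h
            have h1 : nOf S Q g.1 = nOf S Q g'.1 := by
              have h0 := congrArg (fun b : {a : M // S.PowerFree k a} => fOf S ↑b) h
              simpa only [fOf_eq S rfl] using h0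
            exact Subtype.ext (nOf_injOn S Q k g.2 g'.2 h1)
      _ ≤ _ := Summable.sum_le_tsum G (fun a _ => (exp_nonneg _))
            (summable_PF S hk hσ1 hsum hsum2)
  have ht : Tendsto (fun Q : Finset ↥S.P =>
      exp ((∑ p ∈ Q, exp (-σ * S.deg ↑p)) - ∑' p : S.P, exp (-2 * S.deg ↑p)))
      atTop (nhds (exp ((∑' p : S.P, exp (-σ * S.deg ↑p)) -
        ∑' p : S.P, exp (-2 * S.deg ↑p)))) := by
    apply (Real.continuous_exp.tendsto _).comp
    exact hsum.hasSum.sub_const _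
  exact le_of_tendsto ht (Filter.Eventually.of_forall key)

lemma log_zeta_bound (hk : 2 ≤ k) (hσ1 : 1 ≤ σ)
    (hsum : Summable (fun p : S.P => exp (-σ * S.deg ↑p)))
    (hsum2 : Summable (fun p : S.P => exp (-2 * S.deg ↑p))) :
    |Real.log (∑' a : {a : M // S.PowerFree k a}, exp (-σ * S.deg ↑a)) -
        ∑' p : S.P, exp (-σ * S.deg ↑p)| ≤
      (k:ℝ) * ∑' p : S.P, exp (-2 * S.deg ↑p) := by
  set T2 := ∑' p : S.P, exp (-2 * S.deg ↑p) with hT2def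
  set Tσ := ∑' p : S.P, exp (-σ * S.deg ↑p) with hTσdef
  set Z := ∑' a : {a : M // S.PowerFree k a}, exp (-σ * S.deg ↑a) with hZdef
  have hT2 : 0 ≤ T2 := tsum_nonneg (fun p => exp_nonneg _)
  have hZpos : 0 < Z := lt_of_lt_of_le (exp_pos _) (zeta_lb S hk hσ1 hsum hsum2)
  have hlow : Tσ - T2 ≤ Real.log Z :=
    (Real.le_log_iff_exp_le hZpos).mpr (zeta_lb S hk hσ1 hsum hsum2)
  have hup : Real.log Z ≤ Tσ + ((k:ℝ) - 2) * T2 := by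
    rw [Real.log_le_iff_le_exp hZpos]
    exact zeta_ub S hk hσ1 hsum hsum2
  have hk2 : (2:ℝ) ≤ (k:ℝ) := by exact_mod_cast hk
  rw [abs_le]
  constructor <;> nlinarith

end Euler

section Main

theorem main_asymp (ρ γ δ : ℝ) (hρ : 0 < ρ) (hγ : -1 < γ) (hδ0 : 0 < δ) (hδ1 : δ ≤ 1)
    (hasymp : (fun x : ℝ => ((primeCount S x : ℝ)) - ρ * x ^ γ * Real.exp x) =O[atTop]
      fun x : ℝ => x ^ (γ - δ) * Real.exp x)
    (k : ℕ) (hk : 2 ≤ k) :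
    (fun σ : ℝ => Real.log (∑' a : {a : M // S.PowerFree k a}, exp (-σ * S.deg ↑a)) -
        ρ * Real.Gamma (1 + γ) * (σ - 1) ^ (-1 - γ))
      =o[nhdsWithin 1 (Set.Ioi 1)]
      (fun σ : ℝ => ρ * Real.Gamma (1 + γ) * (σ - 1) ^ (-1 - γ)) := by
  classical
  obtain ⟨C, hC0, hCbd⟩ := hasymp.exists_nonneg
  obtain ⟨X₁, hX₁⟩ := Filter.eventually_atTop.mp hCbd.bound
  set X₀ := max X₁ 1 with hX₀def
  have hX₀1 : (1:ℝ) ≤ X₀ := le_max_right _ _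
  have hbd : ∀ x, X₀ ≤ x →
      |((primeCount S x : ℝ)) - ρ * x ^ γ * exp x| ≤ C * x ^ (γ - δ) * exp x := by
    intro x hx
    have hx1 : (1:ℝ) ≤ x := le_trans hX₀1 hx
    have h := hX₁ x (le_trans (le_max_left _ _) hx)
    rw [Real.norm_eq_abs, Real.norm_eq_abs, abs_mul,
      abs_of_nonneg (Real.rpow_nonneg (by linarith : (0:ℝ) ≤ x) _),
      abs_of_nonneg (exp_nonneg _)] at h
    calc |((primeCount S x : ℝ)) - ρ * x ^ γ * exp x| ≤ C * (x ^ (γ - δ) * exp x) := h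
      _ = C * x ^ (γ - δ) * exp x := by ring
  set δ' := min δ ((1+γ)/2) with hδ'def
  have hδ'0 : 0 < δ' := lt_min hδ0 (by linarith)
  have hδ'δ : δ' ≤ δ := min_le_left _ _
  have hγδ' : -1 < γ - δ' := by
    have := min_le_right δ ((1+γ)/2)
    linarith
  have hsum2 : Summable (fun p : S.P => exp (-2 * S.deg ↑p)) :=
    summable_primes S hρ hγ hC0 hX₀1 hδ'δ hγδ' hbd (by norm_num)
  have hΓpos : 0 < Real.Gamma (1 + γ) := Real.Gamma_pos_of_pos (by linarith)
  set cΓ := ρ * Real.Gamma (1 + γ) with hcΓ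
  have hcΓpos : 0 < cΓ := mul_pos hρ hΓpos
  set L : ℝ → ℝ := fun σ => cΓ * (σ-1) ^ (-1-γ) with hL
  set C₀ : ℝ := (primeCount S X₀ : ℝ) * X₀ + ρ * ∫ x in Set.Ioc (0:ℝ) X₀, x ^ γ with hC₀
  set C₁ : ℝ := C * Real.Gamma (γ - δ' + 1) with hC₁
  set T2 := ∑' p : S.P, exp (-2 * S.deg ↑p) with hT2
  have key : ∀ σ : ℝ, 1 < σ → σ < 2 →
      |Real.log (∑' a : {a : M // S.PowerFree k a}, exp (-σ * S.deg ↑a)) - L σ| ≤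
        ((k:ℝ) * T2 + 2*C₀) + 2*C₁ * ((σ-1) ^ δ' * (σ-1) ^ (-1-γ)) + (σ-1) * L σ := by
    intro σ hσ1 hσ2
    have hσ1' : 0 < σ - 1 := by linarith
    have hsum : Summable (fun p : S.P => exp (-σ * S.deg ↑p)) :=
      summable_primes S hρ hγ hC0 hX₀1 hδ'δ hγδ' hbd hσ1
    have hlog := log_zeta_bound S hk hσ1.le hsum hsum2
    have hTeq := primeSum_eq S hρ hγ hC0 hX₀1 hδ'δ hγδ' hbd hσ1
    have hIest := I_est S hρ hγ hC0 hX₀1 hδ'δ hγδ' hbd hσ1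
    set Z := ∑' a : {a : M // S.PowerFree k a}, exp (-σ * S.deg ↑a) with hZ
    set Tσ := ∑' p : S.P, exp (-σ * S.deg ↑p) with hTσ
    set I := ∫ x in Set.Ioi (0:ℝ), (primeCount S x : ℝ) * exp (-(σ * x)) with hI
    have hLeq : L σ = ρ * (Real.Gamma (γ+1) * (σ-1) ^ (-(γ+1))) := by
      rw [hL, hcΓ, show (γ + 1 : ℝ) = 1 + γ by ring, show (-(1+γ) : ℝ) = -1-γ by ring]
      ring
    have hrpow_split : (σ-1) ^ (-(γ-δ'+1)) = (σ-1) ^ δ' * (σ-1) ^ (-1-γ) := by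
      rw [← Real.rpow_add hσ1']
      congr 1
      ring
    have hLpos : 0 < L σ := by
      rw [hL]
      exact mul_pos hcΓpos (Real.rpow_pos_of_pos hσ1' _)
    -- |Tσ - L σ|
    have hIabs : |I - L σ| ≤ C₀ + C₁ * ((σ-1) ^ δ' * (σ-1) ^ (-1-γ)) := by
      rw [hLeq, hC₀, hC₁]
      calc |I - ρ * (Real.Gamma (γ+1) * (σ-1) ^ (-(γ+1)))| ≤
          ((primeCount S X₀ : ℝ) * X₀ + ρ * ∫ x in Set.Ioc (0:ℝ) X₀, x ^ γ) +
            C * (Real.Gamma (γ-δ'+1) * (σ-1) ^ (-(γ-δ'+1))) := hIest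
        _ = _ := by rw [hrpow_split]; ring
    have hTabs : |Tσ - L σ| ≤ 2*C₀ + 2*C₁ * ((σ-1) ^ δ' * (σ-1) ^ (-1-γ)) + (σ-1) * L σ := by
      have h1 : Tσ - L σ = σ * (I - L σ) + (σ - 1) * L σ := by
        rw [hTeq]
        ring
      rw [h1]
      have h2 : |σ * (I - L σ)| ≤ 2 * |I - L σ| := by
        rw [abs_mul, abs_of_nonneg (by linarith : (0:ℝ) ≤ σ)]
        nlinarith [abs_nonneg (I - L σ)]
      have h3 : |σ * (I - L σ) + (σ - 1) * L σ| ≤ |σ * (I - L σ)| + (σ-1) * L σ := by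
        have := abs_add_le (σ * (I - L σ)) ((σ - 1) * L σ)
        rwa [abs_of_nonneg (by positivity : (0:ℝ) ≤ (σ-1) * L σ)] at this
      linarith
    calc |Real.log Z - L σ| ≤ |Real.log Z - Tσ| + |Tσ - L σ| := abs_sub_le _ _ _
      _ ≤ ((k:ℝ) * T2 + 2*C₀) + 2*C₁ * ((σ-1) ^ δ' * (σ-1) ^ (-1-γ)) + (σ-1) * L σ := by
        linarith
  -- filter facts
  have hself : ∀ᶠ σ in 𝓝[>](1:ℝ), 1 < σ := eventually_mem_nhdsWithin
  have hlt2 : ∀ᶠ σ in 𝓝[>](1:ℝ), σ < 2 :=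
    Filter.Eventually.filter_mono nhdsWithin_le_nhds
      (Filter.Tendsto.eventually_lt_const (by norm_num) Filter.tendsto_id)
  have hy0 : Tendsto (fun σ:ℝ => σ - 1) (𝓝[>](1:ℝ)) (𝓝 0) := by
    have h : Tendsto (fun σ:ℝ => σ - 1) (𝓝 (1:ℝ)) (𝓝 ((1:ℝ) - 1)) :=
      Filter.Tendsto.sub_const tendsto_id 1
    have h' : Tendsto (fun σ:ℝ => σ - 1) (𝓝 (1:ℝ)) (𝓝 (0:ℝ)) := by simpa using h
    exact h'.mono_left nhdsWithin_le_nhds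
  have hyIoi : Tendsto (fun σ:ℝ => σ - 1) (𝓝[>](1:ℝ)) (𝓝[>](0:ℝ)) := by
    rw [tendsto_nhdsWithin_iff]
    exact ⟨hy0, hself.mono fun σ h => by simp [Set.mem_Ioi]; linarith⟩
  have hpow0 : ∀ b : ℝ, 0 < b → Tendsto (fun y:ℝ => y ^ b) (𝓝[>](0:ℝ)) (𝓝 0) := by
    intro b hb
    have h := (Real.continuousAt_rpow_const 0 b (Or.inr hb.le)).tendsto.mono_left
      (nhdsWithin_le_nhds (s := Set.Ioi (0:ℝ)))
    rwa [Real.zero_rpow hb.ne'] at h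
  have hLinf : Tendsto L (𝓝[>](1:ℝ)) atTop := by
    have h1 : Tendsto (fun y:ℝ => y ^ (1+γ)) (𝓝[>](0:ℝ)) (𝓝[>](0:ℝ)) := by
      rw [tendsto_nhdsWithin_iff]
      exact ⟨hpow0 _ (by linarith), eventually_mem_nhdsWithin.mono
        fun y hy => Real.rpow_pos_of_pos hy _⟩
    have h2 : Tendsto (fun σ:ℝ => ((σ-1) ^ (1+γ))⁻¹) (𝓝[>](1:ℝ)) atTop :=
      (tendsto_inv_nhdsGT_zero.comp h1).comp hyIoi
    have h3 := h2.const_mul_atTop hcΓpos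
    apply h3.congr'
    filter_upwards [hself] with σ hσ
    rw [hL, ← Real.rpow_neg (by linarith : (0:ℝ) ≤ σ - 1), show (-(1+γ):ℝ) = -1-γ by ring]
  have h1 : (fun _ : ℝ => ((k:ℝ) * T2 + 2*C₀)) =o[𝓝[>](1:ℝ)] L := by
    apply Asymptotics.isLittleO_const_left.mpr
    right
    have := tendsto_abs_atTop_atTop.comp hLinf
    simpa [Function.comp_def, Real.norm_eq_abs] using this
  have h2 : (fun σ : ℝ => 2*C₁ * ((σ-1) ^ δ' * (σ-1) ^ (-1-γ))) =o[𝓝[>](1:ℝ)] L := by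
    have h2a : (fun σ : ℝ => (σ-1) ^ δ') =o[𝓝[>](1:ℝ)] (fun _ => (1:ℝ)) :=
      (Asymptotics.isLittleO_one_iff ℝ).mpr ((hpow0 δ' hδ'0).comp hyIoi)
    have h2b := (h2a.mul_isBigO (Asymptotics.isBigO_refl L (𝓝[>](1:ℝ)))).const_mul_left (2*C₁/cΓ)
    apply h2b.congr
    · intro σ
      rw [hL]
      field_simp
    · intro σ
      rw [one_mul]
  have h3 : (fun σ : ℝ => (σ-1) * L σ) =o[𝓝[>](1:ℝ)] L := by
    have h3a : (fun σ : ℝ => σ - 1) =o[𝓝[>](1:ℝ)] (fun _ => (1:ℝ)) :=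
      (Asymptotics.isLittleO_one_iff ℝ).mpr hy0
    have h3b := h3a.mul_isBigO (Asymptotics.isBigO_refl L (𝓝[>](1:ℝ)))
    apply h3b.congr (fun σ => rfl)
    intro σ
    rw [one_mul]
  have htotal := (h1.add h2).add h3
  have hfinal : (fun σ : ℝ => Real.log (∑' a : {a : M // S.PowerFree k a},
      exp (-σ * S.deg ↑a)) - L σ) =O[𝓝[>](1:ℝ)]
      (fun σ : ℝ => ((k:ℝ) * T2 + 2*C₀) + 2*C₁ * ((σ-1) ^ δ' * (σ-1) ^ (-1-γ)) +
        (σ-1) * L σ) := by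
    apply Asymptotics.IsBigO.of_bound 1
    filter_upwards [hself, hlt2] with σ hσ1 hσ2
    rw [Real.norm_eq_abs, Real.norm_eq_abs, one_mul]
    exact (key σ hσ1 hσ2).trans (le_abs_self _)
  exact hfinal.trans_isLittleO htotal

end Main

end Analytic

end AuxPF

/-- `ln ζ_{G_k}(σ) = ρ Γ(1+γ) (σ−1)^{−1−γ} (1 + o(1))` as `σ ↓ 1`. -/
theorem stmt4 {M : Type} [CommMonoid M] (S : ArithSemigroup M)
    (ρ γ δ : ℝ) (hρ : 0 < ρ) (hγ : -1 < γ) (hδ0 : 0 < δ) (hδ1 : δ ≤ 1)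
    (hasymp : PrimeAsymp S ρ γ δ) (k : ℕ) (hk : 2 ≤ k) :
    (fun σ : ℝ => Real.log (zetaPF S k σ) -
        ρ * Real.Gamma (1 + γ) * (σ - 1) ^ (-1 - γ))
      =o[nhdsWithin 1 (Set.Ioi 1)]
      (fun σ : ℝ => ρ * Real.Gamma (1 + γ) * (σ - 1) ^ (-1 - γ)) := by
  have hasymp' : (fun x : ℝ => ((primeCount S x : ℝ)) - ρ * x ^ γ * Real.exp x) =O[atTop]
      fun x : ℝ => x ^ (γ - δ) * Real.exp x := hasymp
  have h := AuxPF.main_asymp S ρ γ δ hρ hγ hδ0 hδ1 hasymp' k hk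
  simpa [zetaPF] using h
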